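/- Let Q be a simple quadrilateral in the Euclidean plane with vertices a, b, c, d appearing in this cyclic order along its boundary, and suppose the interior angle of Q at the vertex b is strictly greater than 180° (b is reflex). Then b lies in the convex hull of the three remaining vertices {a, c, d}. -/

import Mathlib

open Set Metric
open scoped ENNReal

noncomputable section

/-- The Euclidean plane. -/
abbrev Plane : Type := EuclideanSpace ℝ (Fin 2)

/-- A *simple polygon*: the compact region of the plane bounded by a simple
closed polygonal curve, together with the cyclic sequence of vertices of that
curve.  The field `carrier` is the region (boundary included); the field
`frontier_eq` states that the topological boundary of the region is exactly
the closed polygonal curve through the vertices, and the fields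
`edges_adjacent`/`edges_disjoint` state that this curve is simple. -/
structure SimplePolygon where
  /-- the number of vertices -/
  n : ℕ
  /-- a polygon has at least three vertices -/
  three_le : 3 ≤ n
  /-- the vertices, in cyclic order along the boundary curve -/
  vertex : ZMod n → Plane
  /-- the compact region bounded by the polygonal curve -/
  carrier : Set Plane
  isCompact : IsCompact carrier
  isConnected : IsConnected carrier
  /-- the region is the closure of its interior (it is a genuine
  two-dimensional region) -/
  regular : carrier = closure (interior carrier)
  /-- the topological boundary of the region is the union of the edges of the
  closed polygonal curve through the vertices -/
  frontier_eq : frontier carrier = ⋃ i : ZMod n, segment ℝ (vertex i) (vertex (i + 1))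
  /-- the vertices are pairwise distinct -/
  vertex_injective : Function.Injective vertex
  /-- consecutive edges of the curve meet exactly in their common vertex -/
  edges_adjacent : ∀ i : ZMod n,
    segment ℝ (vertex i) (vertex (i + 1)) ∩ segment ℝ (vertex (i + 1)) (vertex (i + 2)) =
      {vertex (i + 1)}
  /-- non-adjacent edges of the curve are disjoint -/
  edges_disjoint : ∀ i j : ZMod n, i ≠ j → i + 1 ≠ j → j + 1 ≠ i →
    Disjoint (segment ℝ (vertex i) (vertex (i + 1))) (segment ℝ (vertex j) (vertex (j + 1)))

/-- The geodesic distance between `p` and `q` inside the set `P`: the infimum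
of the lengths (total variations) of continuous paths from `p` to `q` staying
in `P`.  (Non-rectifiable paths have length `∞` and hence do not contribute.) -/
def geodesicDist (P : Set Plane) (p q : Plane) : ℝ≥0∞ :=
  ⨅ (γ : ℝ → Plane) (_ : ContinuousOn γ (Icc 0 1)) (_ : γ 0 = p) (_ : γ 1 = q)
    (_ : MapsTo γ (Icc 0 1) P), eVariationOn γ (Icc 0 1)

/-- `p` sees `q` within `P` if the closed segment `[p,q]` is contained in `P`. -/
def Sees (P : Set Plane) (p q : Plane) : Prop :=
  segment ℝ p q ⊆ P

/-- `G` is a guard set for `P` if `G ⊆ P` and every point of `P` is seen by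
some point of `G`. -/
def IsGuardSet (P : Set Plane) (G : Set Plane) : Prop :=
  G ⊆ P ∧ ∀ x ∈ P, ∃ g ∈ G, Sees P g x

/-- A vertex guard set of a simple polygon: a guard set consisting of
vertices of the polygon. -/
def SimplePolygon.IsVertexGuardSet (P : SimplePolygon) (G : Set Plane) : Prop :=
  G ⊆ Set.range P.vertex ∧ IsGuardSet P.carrier G

/-- The dispersion distance of a guard set `G` in `P`: the infimum of the
geodesic distances between pairs of distinct guards. -/
def dispersionDist (P : Set Plane) (G : Set Plane) : ℝ≥0∞ :=
  ⨅ (g : Plane) (_ : g ∈ G) (h : Plane) (_ : h ∈ G) (_ : g ≠ h), geodesicDist P g h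

/-- The vertex `P.vertex i` is *reflex* (interior angle strictly greater than
`180°`): sufficiently close to the vertex, the segment joining a point of the
incoming edge to a point of the outgoing edge (both distinct from the vertex)
always leaves the polygon. -/
def SimplePolygon.IsReflexAt (P : SimplePolygon) (i : ZMod P.n) : Prop :=
  ∃ δ > (0 : ℝ), ∀ a ∈ segment ℝ (P.vertex (i - 1)) (P.vertex i),
    ∀ c ∈ segment ℝ (P.vertex i) (P.vertex (i + 1)),
      a ≠ P.vertex i → c ≠ P.vertex i →
      dist a (P.vertex i) < δ → dist c (P.vertex i) < δ →
      ¬ segment ℝ a c ⊆ P.carrier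

/-- The vertices of `P` are labeled in counterclockwise order: the shoelace
signed area of the vertex cycle is positive. -/
def SimplePolygon.IsCCW (P : SimplePolygon) : Prop :=
  0 < ∑ i ∈ Finset.range P.n,
    (P.vertex (i : ZMod P.n) 0 * P.vertex ((i : ZMod P.n) + 1) 1 -
      P.vertex ((i : ZMod P.n) + 1) 0 * P.vertex (i : ZMod P.n) 1)

/-- If `Q = (a,b,c,d)` is a simple quadrilateral and the
vertex `b` is reflex, then `b` lies in the convex hull of the other three
vertices.  (Here `a, b, c, d` are `Q.vertex 0, 1, 2, 3`.) -/

private lemma f_le_max_on_segment {E : Type*} [NormedAddCommGroup E] [NormedSpace ℝ E]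
    (f : E →L[ℝ] ℝ) {x y z : E} (hz : z ∈ segment ℝ x y) : f z ≤ max (f x) (f y) := by
  obtain ⟨u, v, hu, hv, huv, rfl⟩ := hz
  simp only [map_add, map_smul, smul_eq_mul]
  have hM : (u + v) * max (f x) (f y) = max (f x) (f y) := by rw [huv, one_mul]
  linarith [mul_le_mul_of_nonneg_left (le_max_left (f x) (f y)) hu,
    mul_le_mul_of_nonneg_left (le_max_right (f x) (f y)) hv]

private lemma mem_frontier_of_gap_right {T : Set ℝ} {x r : ℝ} (hx : x ∈ T) (hxr : x < r)
    (hgap : ∀ y, x < y → y ≤ r → y ∉ T) : x ∈ frontier T := by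
  rw [frontier_eq_closure_inter_closure]
  refine ⟨subset_closure hx, Metric.mem_closure_iff.2 fun ε hε => ?_⟩
  have h1 : x < min (x + ε/2) r := lt_min (by linarith) hxr
  refine ⟨min (x + ε/2) r, hgap _ h1 (min_le_right _ _), ?_⟩
  rw [Real.dist_eq, abs_of_nonpos (by linarith)]
  have := min_le_left (x + ε/2) r
  linarith

private lemma mem_frontier_of_gap_left {T : Set ℝ} {x l : ℝ} (hx : x ∈ T) (hlx : l < x)
    (hgap : ∀ y, l ≤ y → y < x → y ∉ T) : x ∈ frontier T := by
  rw [frontier_eq_closure_inter_closure]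
  refine ⟨subset_closure hx, Metric.mem_closure_iff.2 fun ε hε => ?_⟩
  have h1 : max (x - ε/2) l < x := max_lt (by linarith) hlx
  refine ⟨max (x - ε/2) l, hgap _ (le_max_right _ _) h1, ?_⟩
  rw [Real.dist_eq, abs_of_nonneg (by linarith)]
  have := le_max_left (x - ε/2) l
  linarith

set_option maxHeartbeats 2000000 in
theorem reflex_vertex_mem_convexHull (Q : SimplePolygon) (hn : Q.n = 4)
    (hreflex : Q.IsReflexAt 1) :
    Q.vertex 1 ∈ convexHull ℝ {Q.vertex 0, Q.vertex 2, Q.vertex 3} := by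
  obtain ⟨n, h3, V, C, hcomp, hconn, hreg, hfr, hinj, hadj, hdis⟩ := Q
  unfold SimplePolygon.IsReflexAt at hreflex
  dsimp only at hn hreflex ⊢
  subst hn
  -- index facts
  have e01 : (0 : ZMod 4) + 1 = 1 := by decide
  have e12 : (1 : ZMod 4) + 1 = 2 := by decide
  have e23 : (2 : ZMod 4) + 1 = 3 := by decide
  have e30 : (3 : ZMod 4) + 1 = 0 := by decide
  have e1m : (1 : ZMod 4) - 1 = 0 := by decide
  have e02 : (0 : ZMod 4) + 2 = 2 := by decide
  have h4 : ∀ i : ZMod 4, i = 0 ∨ i = 1 ∨ i = 2 ∨ i = 3 := by decide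
  rw [e1m, e12] at hreflex
  by_contra hmem
  -- separation
  have hfin : ({V 0, V 2, V 3} : Set Plane).Finite :=
    ((Set.finite_singleton _).insert _).insert _
  obtain ⟨f, t, hsep, htlt⟩ := geometric_hahn_banach_closed_point
    (convex_convexHull ℝ _) (hfin.isClosed_convexHull (𝕜 := ℝ)) hmem
  have hsub := subset_convexHull ℝ ({V 0, V 2, V 3} : Set Plane)
  have hv0 : f (V 0) < t := hsep _ (hsub (by simp))
  have hv2 : f (V 2) < t := hsep _ (hsub (by simp))
  have hv3 : f (V 3) < t := hsep _ (hsub (by simp))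
  have hvle : ∀ i : ZMod 4, f (V i) ≤ f (V 1) := by
    intro i
    rcases h4 i with rfl | rfl | rfl | rfl <;> linarith
  have hCclosed : IsClosed C := hcomp.isClosed
  have hfrC : frontier C ⊆ C := hCclosed.frontier_subset
  have hfr_le : ∀ x ∈ frontier C, f x ≤ f (V 1) := by
    intro x hx
    rw [hfr] at hx
    obtain ⟨i, hi⟩ := Set.mem_iUnion.1 hx
    exact le_trans (f_le_max_on_segment f hi) (max_le (hvle i) (hvle (i + 1)))
  obtain ⟨R, hR⟩ := hcomp.isBounded.subset_closedBall 0
  have hD0 : 0 < f (V 1) - f (V 0) := by linarith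
  have hD2 : 0 < f (V 1) - f (V 2) := by linarith
  -- a direction of increase for f
  set w : Plane := (f (V 1) - f (V 0))⁻¹ • (V 1 - V 0) with hw
  have hfw : f w = 1 := by
    rw [hw, map_smul, map_sub, smul_eq_mul]
    field_simp
  have hwne : w ≠ 0 := by
    intro h
    rw [h, map_zero] at hfw
    norm_num at hfw
  have hwnorm : 0 < ‖w‖ := norm_pos_iff.2 hwne
  -- interior points have f-value strictly below f (V 1)
  have hint_lt : ∀ x ∈ interior C, f x < f (V 1) := by
    intro x hx
    by_contra hxf
    push_neg at hxf
    set p : ℝ → Plane := fun r => x + r • w with hp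
    have hpc : Continuous p := by
      exact continuous_const.add (continuous_id.smul continuous_const)
    set T : Set ℝ := p ⁻¹' C with hT
    have hTclosed : IsClosed T := hCclosed.preimage hpc
    have hT0 : (0 : ℝ) ∈ T := by
      show p 0 ∈ C
      simp only [hp, zero_smul, add_zero]
      exact interior_subset hx
    have hTbdd : BddAbove T := by
      refine ⟨(R + ‖x‖) / ‖w‖, fun r hr => ?_⟩
      have h1 : ‖p r‖ ≤ R := by
        have := hR hr
        simpa [Metric.mem_closedBall, dist_zero_right] using this
      have h2 : ‖r • w‖ ≤ ‖p r‖ + ‖x‖ := by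
        have : r • w = p r - x := by simp [hp]
        rw [this]
        exact norm_sub_le_of_le le_rfl le_rfl |>.trans (by simp [add_comm])
      rw [norm_smul, Real.norm_eq_abs] at h2
      rw [le_div_iff₀ hwnorm]
      calc r * ‖w‖ ≤ |r| * ‖w‖ := by
            exact mul_le_mul_of_nonneg_right (le_abs_self r) (norm_nonneg w)
        _ ≤ ‖p r‖ + ‖x‖ := h2
        _ ≤ R + ‖x‖ := by linarith
    have hTne : T.Nonempty := ⟨0, hT0⟩
    have hM := hTclosed.csSup_mem hTne hTbdd
    have hMfr : sSup T ∈ frontier T :=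
      mem_frontier_of_gap_right hM (lt_add_one _)
        (fun y hy _ hyT => absurd (le_csSup hTbdd hyT) (not_le.2 hy))
    have hyfr : p (sSup T) ∈ frontier C := hpc.frontier_preimage_subset C hMfr
    have hm0 : 0 ≤ sSup T := le_csSup hTbdd hT0
    have hmne : sSup T ≠ 0 := by
      intro h
      have hxfr : x ∈ frontier C := by
        have : p (sSup T) = x := by simp [hp, h]
        rwa [this] at hyfr
      rw [hCclosed.frontier_eq] at hxfr
      exact hxfr.2 hx
    have hle := hfr_le _ hyfr
    have : f (p (sSup T)) = f x + sSup T := by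
      simp [hp, map_add, map_smul, hfw]
    rw [this] at hle
    have : 0 < sSup T := lt_of_le_of_ne hm0 (Ne.symm hmne)
    linarith
  -- V 1 lies in the carrier, hence in the closure of the interior
  have hv1fr : V 1 ∈ frontier C := by
    rw [hfr]
    refine Set.mem_iUnion.2 ⟨0, ?_⟩
    rw [e01]
    exact right_mem_segment ℝ (V 0) (V 1)
  have hv1cl : V 1 ∈ closure (interior C) := hreg ▸ hfrC hv1fr
  obtain ⟨δ, hδ, href⟩ := hreflex
  -- the target accuracy
  set N0 := ‖V 1 - V 0‖ with hN0
  set N2 := ‖V 1 - V 2‖ with hN2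
  have hN0' : (0:ℝ) < N0 + 1 := by positivity
  have hN2' : (0:ℝ) < N2 + 1 := by positivity
  set ε1 := δ * (f (V 1) - f (V 0)) / (N0 + 1) with hε1
  set ε2 := δ * (f (V 1) - f (V 2)) / (N2 + 1) with hε2
  set ε3 := f (V 1) - t with hε3
  have hε1pos : 0 < ε1 := div_pos (mul_pos hδ hD0) hN0'
  have hε2pos : 0 < ε2 := div_pos (mul_pos hδ hD2) hN2'
  have hε3pos : 0 < ε3 := by rw [hε3]; linarith
  set ε' := min (min ε1 ε2) ε3 with hε'
  have hε'pos : 0 < ε' := lt_min (lt_min hε1pos hε2pos) hε3pos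
  have hε'1 : ε' ≤ ε1 := le_trans (min_le_left _ _) (min_le_left _ _)
  have hε'2 : ε' ≤ ε2 := le_trans (min_le_left _ _) (min_le_right _ _)
  have hε'3 : ε' ≤ ε3 := min_le_right _ _
  -- an interior point x0 with f-value close to f (V 1)
  obtain ⟨η, hη, hcont⟩ := Metric.continuousAt_iff.1 (f.continuous.continuousAt (x := V 1)) ε' hε'pos
  obtain ⟨x0, hx0int, hx0d⟩ := Metric.mem_closure_iff.1 hv1cl η hη
  have hs_close : |f x0 - f (V 1)| < ε' := by
    have := hcont (show dist x0 (V 1) < η by rwa [dist_comm] at hx0d)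
    rwa [Real.dist_eq] at this
  set s := f x0 with hs
  have hslt : s < f (V 1) := hint_lt _ hx0int
  have hgapε : f (V 1) - s < ε' := by
    have := abs_lt.1 hs_close
    linarith [this.1]
  have hst : t < s := by
    have : f (V 1) - s < ε3 := lt_of_lt_of_le hgapε hε'3
    rw [hε3] at this
    linarith
  -- the point a on edge [V 0, V 1] at level s
  set ua := (s - f (V 0)) / (f (V 1) - f (V 0)) with hua
  set a := V 0 + ua • (V 1 - V 0) with ha
  have hua0 : 0 < ua := div_pos (by linarith) hD0
  have hua1 : ua < 1 := (div_lt_one hD0).2 (by linarith)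
  have haseg : a ∈ segment ℝ (V 0) (V 1) := by
    rw [segment_eq_image']
    exact ⟨ua, ⟨hua0.le, hua1.le⟩, rfl⟩
  have hfa : f a = s := by
    rw [ha, map_add, map_smul, map_sub, smul_eq_mul, hua]
    field_simp
    ring
  -- the point c on edge [V 1, V 2] at level s
  set uc := (f (V 1) - s) / (f (V 1) - f (V 2)) with huc
  set c := V 1 + uc • (V 2 - V 1) with hc
  have huc0 : 0 < uc := div_pos (by linarith) hD2
  have huc1 : uc < 1 := (div_lt_one hD2).2 (by linarith)
  have hcseg : c ∈ segment ℝ (V 1) (V 2) := by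
    rw [segment_eq_image']
    exact ⟨uc, ⟨huc0.le, huc1.le⟩, rfl⟩
  have hfc : f c = s := by
    rw [hc, map_add, map_smul, map_sub, smul_eq_mul, huc]
    field_simp
    ring
  have hane : a ≠ V 1 := by
    intro h
    rw [h] at hfa
    linarith
  have hcne : c ≠ V 1 := by
    intro h
    rw [h] at hfc
    linarith
  -- distance bounds
  have hdista : dist a (V 1) < δ := by
    have hav : a - V 1 = (ua - 1) • (V 1 - V 0) := by
      rw [ha]
      rw [sub_smul, one_smul]
      abel
    rw [dist_eq_norm, hav, norm_smul, Real.norm_eq_abs, abs_of_neg (by linarith)]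
    have h1ua : 1 - ua = (f (V 1) - s) / (f (V 1) - f (V 0)) := by
      rw [hua]
      field_simp
      ring
    rw [neg_sub, h1ua]
    have hlt1 : f (V 1) - s < ε1 := lt_of_lt_of_le hgapε hε'1
    rw [hε1] at hlt1
    have hlt2 : (f (V 1) - s) * (N0 + 1) < δ * (f (V 1) - f (V 0)) :=
      (lt_div_iff₀ hN0').1 hlt1
    rw [div_mul_eq_mul_div, div_lt_iff₀ hD0, ← hN0]
    nlinarith [norm_nonneg (V 1 - V 0)]
  have hdistc : dist c (V 1) < δ := by
    have hcv : c - V 1 = uc • (V 2 - V 1) := by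
      rw [hc]; abel
    rw [dist_eq_norm, hcv, norm_smul, Real.norm_eq_abs, abs_of_pos huc0, huc]
    have hlt1 : f (V 1) - s < ε2 := lt_of_lt_of_le hgapε hε'2
    rw [hε2] at hlt1
    have hlt2 : (f (V 1) - s) * (N2 + 1) < δ * (f (V 1) - f (V 2)) :=
      (lt_div_iff₀ hN2').1 hlt1
    have hnn : ‖V 2 - V 1‖ = N2 := by rw [hN2, norm_sub_rev]
    rw [hnn, div_mul_eq_mul_div, div_lt_iff₀ hD2]
    nlinarith [norm_nonneg (V 1 - V 2)]
  -- the frontier meets the level line {f = s} exactly in {a, c}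
  have hkey : ∀ x ∈ frontier C, f x = s → x = a ∨ x = c := by
    intro x hx hfx
    rw [hfr] at hx
    obtain ⟨i, hi⟩ := Set.mem_iUnion.1 hx
    rcases h4 i with rfl | rfl | rfl | rfl
    · rw [e01, segment_eq_image'] at hi
      obtain ⟨u, hu, rfl⟩ := hi
      left
      have hfu : f (V 0) + u * (f (V 1) - f (V 0)) = s := by
        rw [← hfx, map_add, map_smul, map_sub, smul_eq_mul]
      have : u = ua := by
        rw [hua, eq_div_iff hD0.ne']
        linarith
      rw [ha, this]
    · rw [e12, segment_eq_image'] at hi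
      obtain ⟨u, hu, rfl⟩ := hi
      right
      have hfu : f (V 1) + u * (f (V 2) - f (V 1)) = s := by
        rw [← hfx, map_add, map_smul, map_sub, smul_eq_mul]
      have : u = uc := by
        rw [huc, eq_div_iff hD2.ne']
        linarith
      rw [hc, this]
    · exfalso
      rw [e23] at hi
      have h := f_le_max_on_segment f hi
      rw [hfx] at h
      have := max_lt hv2 hv3
      linarith
    · exfalso
      rw [e30] at hi
      have h := f_le_max_on_segment f hi
      rw [hfx] at h
      have := max_lt hv3 hv0
      linarith
  -- a and c are distinct
  have hca : c ≠ a := by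
    intro h
    have h0 := hadj 0
    rw [e01, e02] at h0
    have : a ∈ ({V 1} : Set Plane) := by
      rw [← h0]
      exact ⟨haseg, h ▸ hcseg⟩
    exact hane this
  have huv : c - a ≠ 0 := sub_ne_zero.2 hca
  -- the kernel of f is one-dimensional
  have hrank : Module.finrank ℝ (LinearMap.ker (f : Plane →ₗ[ℝ] ℝ)) = 1 := by
    have hsurj : Function.Surjective (f : Plane →ₗ[ℝ] ℝ) := by
      intro y
      refine ⟨(y / (f (V 1) - f (V 0))) • (V 1 - V 0), ?_⟩
      simp only [LinearMap.map_smul, smul_eq_mul]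
      rw [show ((f : Plane →ₗ[ℝ] ℝ) (V 1 - V 0)) = f (V 1) - f (V 0) by
        simp [map_sub]]
      field_simp
    have h1 := LinearMap.finrank_range_add_finrank_ker (f : Plane →ₗ[ℝ] ℝ)
    rw [LinearMap.range_eq_top.2 hsurj] at h1
    simp only [finrank_top, Module.finrank_self] at h1
    have h2 : Module.finrank ℝ Plane = 2 := finrank_euclideanSpace_fin
    omega
  have hcaK : c - a ∈ LinearMap.ker (f : Plane →ₗ[ℝ] ℝ) := by
    rw [LinearMap.mem_ker]
    show f (c - a) = 0
    rw [map_sub, hfa, hfc, sub_self]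
  have hx0K : x0 - a ∈ LinearMap.ker (f : Plane →ₗ[ℝ] ℝ) := by
    rw [LinearMap.mem_ker]
    show f (x0 - a) = 0
    rw [map_sub, hfa, ← hs, sub_self]
  obtain ⟨r0, hr0⟩ :=
    (finrank_eq_one_iff_of_nonzero' (⟨c - a, hcaK⟩ : LinearMap.ker (f : Plane →ₗ[ℝ] ℝ))
      (by simpa [Submodule.mk_eq_zero] using huv)).1 hrank ⟨x0 - a, hx0K⟩
  have hr0' : r0 • (c - a) = x0 - a := congrArg Subtype.val hr0
  -- the line through a and c
  set p : ℝ → Plane := fun r => a + r • (c - a) with hp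
  have hpc : Continuous p := continuous_const.add (continuous_id.smul continuous_const)
  have hpinj : ∀ r1 r2 : ℝ, p r1 = p r2 → r1 = r2 := by
    intro r1 r2 h
    have h' : (r1 - r2) • (c - a) = 0 := by
      rw [sub_smul]
      simp only [hp] at h
      have := add_left_cancel h
      rw [this, sub_self]
    rcases smul_eq_zero.1 h' with h'' | h''
    · linarith [sub_eq_zero.1 h'']
    · exact absurd h'' huv
  have hp0 : p 0 = a := by simp [hp]
  have hp1 : p 1 = c := by simp [hp]
  have hpr0 : p r0 = x0 := by
    simp only [hp, hr0']
    abel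
  have hfp : ∀ r : ℝ, f (p r) = s := by
    intro r
    simp only [hp, map_add, map_smul, map_sub, smul_eq_mul, hfa, hfc]
    ring
  set T := p ⁻¹' C with hTdef
  have hTclosed : IsClosed T := hCclosed.preimage hpc
  have hafr : a ∈ frontier C := by
    rw [hfr]
    refine Set.mem_iUnion.2 ⟨0, ?_⟩
    rw [e01]
    exact haseg
  have hcfr : c ∈ frontier C := by
    rw [hfr]
    refine Set.mem_iUnion.2 ⟨1, ?_⟩
    rw [e12]
    exact hcseg
  have hT0 : (0 : ℝ) ∈ T := by
    show p 0 ∈ C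
    rw [hp0]
    exact hfrC hafr
  have hT1 : (1 : ℝ) ∈ T := by
    show p 1 ∈ C
    rw [hp1]
    exact hfrC hcfr
  have hfrT : ∀ r ∈ frontier T, r = 0 ∨ r = 1 := by
    intro r hr
    have h1 : p r ∈ frontier C := hpc.frontier_preimage_subset C hr
    rcases hkey _ h1 (hfp r) with h | h
    · exact Or.inl (hpinj r 0 (by rw [hp0, h]))
    · exact Or.inr (hpinj r 1 (by rw [hp1, h]))
  have hr0int : r0 ∈ interior T := by
    have hsub' : p ⁻¹' interior C ⊆ T := Set.preimage_mono interior_subset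
    refine interior_maximal hsub' (isOpen_interior.preimage hpc) ?_
    show p r0 ∈ interior C
    rw [hpr0]
    exact hx0int
  have hr0T : r0 ∈ T := interior_subset hr0int
  have hr0ne0 : r0 ≠ 0 := by
    intro h
    have : a ∈ interior C := by
      rw [← hp0, ← h, hpr0]
      exact hx0int
    rw [hCclosed.frontier_eq] at hafr
    exact hafr.2 this
  have hr0ne1 : r0 ≠ 1 := by
    intro h
    have : c ∈ interior C := by
      rw [← hp1, ← h, hpr0]
      exact hx0int
    rw [hCclosed.frontier_eq] at hcfr
    exact hcfr.2 this
  -- T is bounded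
  have hcan : 0 < ‖c - a‖ := norm_pos_iff.2 huv
  have hTb : ∀ r ∈ T, |r| ≤ (R + ‖a‖) / ‖c - a‖ := by
    intro r hr
    have h1 : ‖p r‖ ≤ R := by
      have := hR hr
      simpa [Metric.mem_closedBall, dist_zero_right] using this
    have h2 : r • (c - a) = p r - a := by simp [hp]
    have h3 : ‖r • (c - a)‖ ≤ ‖p r‖ + ‖a‖ := by
      rw [h2]
      exact (norm_sub_le _ _)
    rw [norm_smul, Real.norm_eq_abs] at h3
    rw [le_div_iff₀ hcan]
    linarith
  have hAbove : BddAbove T := ⟨(R + ‖a‖) / ‖c - a‖,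
    fun r hr => (le_abs_self r).trans (hTb r hr)⟩
  have hBelow : BddBelow T := ⟨-((R + ‖a‖) / ‖c - a‖),
    fun r hr => by have h1 := hTb r hr; have h2 := neg_abs_le r; linarith⟩
  have hTne : T.Nonempty := ⟨0, hT0⟩
  -- sSup T = 1 and sInf T = 0
  have hMmem : sSup T ∈ T := hTclosed.csSup_mem hTne hAbove
  have hMfr : sSup T ∈ frontier T :=
    mem_frontier_of_gap_right hMmem (lt_add_one _)
      (fun y hy _ hyT => absurd (le_csSup hAbove hyT) (not_le.2 hy))
  have hM1 : sSup T = 1 := by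
    rcases hfrT _ hMfr with h | h
    · exfalso
      have := le_csSup hAbove hT1
      rw [h] at this
      linarith
    · exact h
  have hmmem : sInf T ∈ T := hTclosed.csInf_mem hTne hBelow
  have hmfr : sInf T ∈ frontier T :=
    mem_frontier_of_gap_left hmmem (by linarith [lt_add_one (sInf T - 1)] : sInf T - 1 < sInf T)
      (fun y _ hy hyT => absurd (csInf_le hBelow hyT) (not_le.2 hy))
  have hm0 : sInf T = 0 := by
    rcases hfrT _ hmfr with h | h
    · exact h
    · exfalso
      have := csInf_le hBelow hT0
      rw [h] at this
      linarith
  have hr0le : r0 ≤ 1 := hM1 ▸ le_csSup hAbove hr0T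
  have hr0ge : 0 ≤ r0 := hm0 ▸ csInf_le hBelow hr0T
  have hr0pos : 0 < r0 := lt_of_le_of_ne hr0ge (Ne.symm hr0ne0)
  have hr0lt1 : r0 < 1 := lt_of_le_of_ne hr0le hr0ne1
  -- the whole interval [0, 1] is contained in T
  have hIcc : Set.Icc (0 : ℝ) 1 ⊆ T := by
    intro r hr
    by_contra hrT
    have hrne0 : r ≠ 0 := fun h => hrT (h ▸ hT0)
    have hrne1 : r ≠ 1 := fun h => hrT (h ▸ hT1)
    have hr00 : 0 < r := lt_of_le_of_ne hr.1 (Ne.symm hrne0)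
    have hr11 : r < 1 := lt_of_le_of_ne hr.2 hrne1
    -- left block
    have hT1closed : IsClosed (T ∩ Set.Icc 0 r) := hTclosed.inter isClosed_Icc
    have hT1ne : (T ∩ Set.Icc 0 r).Nonempty := ⟨0, hT0, le_refl 0, hr00.le⟩
    have hT1bdd : BddAbove (T ∩ Set.Icc 0 r) := ⟨r, fun y hy => hy.2.2⟩
    have hm1mem := hT1closed.csSup_mem hT1ne hT1bdd
    set m1 := sSup (T ∩ Set.Icc 0 r) with hm1def
    have hm1r : m1 < r := lt_of_le_of_ne hm1mem.2.2 (fun h => hrT (h ▸ hm1mem.1))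
    have hm1fr : m1 ∈ frontier T :=
      mem_frontier_of_gap_right hm1mem.1 hm1r
        (fun y hy1 hy2 hyT =>
          absurd (le_csSup hT1bdd ⟨hyT, le_trans hm1mem.2.1 hy1.le, hy2⟩) (not_le.2 hy1))
    have hm10 : m1 = 0 := by
      rcases hfrT _ hm1fr with h | h
      · exact h
      · exfalso; linarith
    have hgapL : ∀ y, 0 < y → y ≤ r → y ∉ T := by
      intro y h1 h2 hyT
      have := le_csSup hT1bdd ⟨hyT, h1.le, h2⟩
      rw [← hm1def, hm10] at this
      linarith
    -- right block
    have hT2closed : IsClosed (T ∩ Set.Icc r 1) := hTclosed.inter isClosed_Icc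
    have hT2ne : (T ∩ Set.Icc r 1).Nonempty := ⟨1, hT1, hr11.le, le_refl 1⟩
    have hT2bdd : BddBelow (T ∩ Set.Icc r 1) := ⟨r, fun y hy => hy.2.1⟩
    have hm2mem := hT2closed.csInf_mem hT2ne hT2bdd
    set m2 := sInf (T ∩ Set.Icc r 1) with hm2def
    have hm2r : r < m2 := lt_of_le_of_ne hm2mem.2.1 (fun h => hrT (by rw [h]; exact hm2mem.1))
    have hm2fr : m2 ∈ frontier T :=
      mem_frontier_of_gap_left hm2mem.1 hm2r
        (fun y hy1 hy2 hyT =>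
          absurd (csInf_le hT2bdd ⟨hyT, hy1, le_trans hy2.le hm2mem.2.2⟩) (not_le.2 hy2))
    have hm21 : m2 = 1 := by
      rcases hfrT _ hm2fr with h | h
      · exfalso; linarith
      · exact h
    have hgapR : ∀ y, r ≤ y → y < 1 → y ∉ T := by
      intro y h1 h2 hyT
      have := csInf_le hT2bdd ⟨hyT, h1, h2.le⟩
      rw [← hm2def, hm21] at this
      linarith
    rcases le_or_gt r0 r with h | h
    · exact hgapL r0 hr0pos h hr0T
    · exact hgapR r0 h.le hr0lt1 hr0T
  -- the segment [a, c] is contained in the carrier: contradiction with reflexivity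
  have hsegsub : segment ℝ a c ⊆ C := by
    rw [segment_eq_image']
    rintro x ⟨u, hu, rfl⟩
    exact hIcc hu
  exact href a haseg c hcseg hane hcne hdista hdistc hsegsub
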